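/- Let β ∈ (0,1) and −β < ν < 0, and define the weight function Ũ_{1−β,β,ν}(x) = (Γ(β)/(β²Γ(β+ν)Γ(−ν))) ∫_1^∞ (t^{1/β}−1)^{−ν−1} t^{1/β−1} e^{−xt/β} dt for x > 0. Then Ũ_{1−β,β,ν} is nonnegative and solves the Stieltjes moment problem for the case α = 1−β: for every n ∈ ℕ, ∫_0^∞ x^n Ũ_{1−β,β,ν}(x) dx = β^n · Γ(β) · n! · Γ(βn+β+ν) / (Γ(β+ν) · Γ(βn+β)) = [n]_{1−β,β,ν}!. -/

import Mathlib

open MeasureTheory Set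

/-- The generalized factorial `[n]_{α,β,ν}!`. -/
noncomputable def genFact (α β ν : ℝ) (n : ℕ) : ℝ :=
  (∏ i ∈ Finset.Icc 1 n, Real.Gamma (β * i + 1) / Real.Gamma (β * i + 1 - α)) *
    (Real.Gamma (β * n + 1 - α + ν) / Real.Gamma (1 - α + ν))

/-- The weight function `Ũ_{1−β,β,ν}` for the case `α = 1 − β`. -/
noncomputable def subWeight (β ν : ℝ) (x : ℝ) : ℝ :=
  (Real.Gamma β / (β ^ 2 * Real.Gamma (β + ν) * Real.Gamma (-ν))) *
    ∫ t in Set.Ioi (1 : ℝ),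
      (t ^ (1 / β) - 1) ^ (-ν - 1) * t ^ (1 / β - 1) * Real.exp (-(x * t) / β)

lemma genFact_prod (β : ℝ) (hβ0 : 0 < β) (n : ℕ) :
    (∏ i ∈ Finset.Icc 1 n, Real.Gamma (β * i + 1) / Real.Gamma (β * i + β)) =
      β ^ n * n.factorial * Real.Gamma β / Real.Gamma (β * n + β) := by
  induction n with
  | zero => simp [Real.Gamma_pos_of_pos hβ0 |>.ne']
  | succ n ih =>
    rw [Finset.prod_Icc_succ_top (by omega), ih]
    have h1 : (0:ℝ) < β * n + β := by positivity
    have e1 : β * ((n:ℕ)+1 : ℕ) + 1 = (β * n + β) + 1 := by push_cast; ring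
    have e2 : β * ((n:ℕ)+1 : ℕ) + β = β * n + β + β := by push_cast; ring
    rw [e1, e2, Real.Gamma_add_one h1.ne']
    have h3 : (Real.Gamma (β * n + β)) ≠ 0 := (Real.Gamma_pos_of_pos h1).ne'
    have h5 : Real.Gamma (β * n + β + β) ≠ 0 := by
      have : (0:ℝ) < β * n + β + β := by positivity
      exact (Real.Gamma_pos_of_pos this).ne'
    rw [Nat.factorial_succ]
    push_cast
    field_simp
    ring

lemma genFact_eq (β ν : ℝ) (hβ0 : 0 < β) (hβν : 0 < β + ν) (n : ℕ) :
    β ^ n * Real.Gamma β * n.factorial * Real.Gamma (β * n + β + ν) /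
        (Real.Gamma (β + ν) * Real.Gamma (β * n + β)) = genFact (1 - β) β ν n := by
  rw [genFact]
  have e0 : (1:ℝ) - (1 - β) + ν = β + ν := by ring
  have e1 : β * (n:ℝ) + 1 - (1 - β) + ν = β * n + β + ν := by ring
  have e2 : ∀ i : ℕ, β * (i:ℝ) + 1 - (1 - β) = β * i + β := fun i => by ring
  rw [e0, e1]
  rw [Finset.prod_congr rfl fun i _ => by rw [e2 i]]
  rw [genFact_prod β hβ0 n]
  have h1 : Real.Gamma (β + ν) ≠ 0 := (Real.Gamma_pos_of_pos hβν).ne'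
  have h2 : Real.Gamma (β * n + β) ≠ 0 := by
    have : (0:ℝ) < β * n + β := by positivity
    exact (Real.Gamma_pos_of_pos this).ne'
  field_simp

lemma realBeta_integrable {a b : ℝ} (ha : 0 < a) (hb : 0 < b) :
    IntegrableOn (fun x : ℝ => x ^ (a - 1) * (1 - x) ^ (b - 1)) (Ioo 0 1) := by
  have hc : IntervalIntegrable
      (fun x : ℝ => (x : ℂ) ^ ((a : ℂ) - 1) * ((1 : ℂ) - x) ^ ((b : ℂ) - 1)) volume 0 1 :=
    Complex.betaIntegral_convergent (by simpa using ha) (by simpa using hb)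
  have hIoc : IntegrableOn
      (fun x : ℝ => (x : ℂ) ^ ((a : ℂ) - 1) * ((1 : ℂ) - x) ^ ((b : ℂ) - 1)) (Ioc 0 1) := by
    rwa [intervalIntegrable_iff_integrableOn_Ioc_of_le (by norm_num)] at hc
  have hIoo := (hIoc.mono_set Ioo_subset_Ioc_self).norm
  refine IntegrableOn.congr_fun hIoo (fun x hx => ?_) measurableSet_Ioo
  obtain ⟨hx0, hx1⟩ := hx
  rw [norm_mul]
  rw [Complex.norm_cpow_eq_rpow_re_of_pos (by exact_mod_cast hx0)]
  have h1x : (0:ℝ) < 1 - x := by linarith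
  have : (1 : ℂ) - (x : ℂ) = ((1 - x : ℝ) : ℂ) := by push_cast; ring
  rw [this, Complex.norm_cpow_eq_rpow_re_of_pos h1x]
  norm_num

lemma realBeta_value {a b : ℝ} (ha : 0 < a) (hb : 0 < b) :
    ∫ x in Ioo (0:ℝ) 1, x ^ (a - 1) * (1 - x) ^ (b - 1) =
      Real.Gamma a * Real.Gamma b / Real.Gamma (a + b) := by
  have key : Complex.Gamma a * Complex.Gamma b =
      Complex.Gamma ((a : ℂ) + b) * Complex.betaIntegral a b :=
    Complex.Gamma_mul_Gamma_eq_betaIntegral (by simpa using ha) (by simpa using hb)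
  have hbeta : Complex.betaIntegral a b =
      ((∫ x in Ioo (0:ℝ) 1, x ^ (a - 1) * (1 - x) ^ (b - 1) : ℝ) : ℂ) := by
    rw [Complex.betaIntegral, intervalIntegral.integral_of_le (by norm_num : (0:ℝ) ≤ 1),
      integral_Ioc_eq_integral_Ioo]
    rw [show ((∫ x in Ioo (0:ℝ) 1, x ^ (a - 1) * (1 - x) ^ (b - 1) : ℝ) : ℂ) =
        ∫ x in Ioo (0:ℝ) 1, ((x ^ (a - 1) * (1 - x) ^ (b - 1) : ℝ) : ℂ) from
      (integral_ofReal).symm]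
    refine setIntegral_congr_fun measurableSet_Ioo (fun x hx => ?_)
    obtain ⟨hx0, hx1⟩ := hx
    have h1x : (0:ℝ) ≤ 1 - x := by linarith
    rw [show ((a:ℂ) - 1) = ((a - 1 : ℝ) : ℂ) by push_cast; ring,
      show ((b:ℂ) - 1) = ((b - 1 : ℝ) : ℂ) by push_cast; ring,
      show (1 - (x:ℂ)) = ((1 - x : ℝ) : ℂ) by push_cast; ring,
      ← Complex.ofReal_cpow hx0.le, ← Complex.ofReal_cpow h1x]
    push_cast
    ring
  rw [hbeta, ← Complex.ofReal_add, Complex.Gamma_ofReal, Complex.Gamma_ofReal,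
    Complex.Gamma_ofReal, ← Complex.ofReal_mul, ← Complex.ofReal_mul] at key
  have := Complex.ofReal_inj.mp key
  have hG : Real.Gamma (a + b) ≠ 0 := (Real.Gamma_pos_of_pos (by linarith)).ne'
  field_simp [this]
  rw [this]; ring

lemma image_inv_Ioi_one : (fun u : ℝ => u⁻¹) '' Ioi 1 = Ioo 0 1 := by
  ext y
  constructor
  · rintro ⟨u, hu, rfl⟩
    have hu0 : (0:ℝ) < u := lt_trans one_pos hu
    exact ⟨inv_pos.mpr hu0, (inv_lt_one_iff₀).mpr (Or.inr hu)⟩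
  · rintro ⟨hy0, hy1⟩
    exact ⟨y⁻¹, (one_lt_inv_iff₀).mpr ⟨hy0, hy1⟩, inv_inv y⟩

lemma betaIoi_pointwise {a b : ℝ} {u : ℝ} (hu : 1 < u) :
    |(-(u ^ 2)⁻¹)| • ((u⁻¹) ^ (b - 1) * (1 - u⁻¹) ^ (a - 1)) =
      (u - 1) ^ (a - 1) * u ^ (-(a + b)) := by
  have hu0 : (0:ℝ) < u := lt_trans one_pos hu
  have hu1 : (0:ℝ) ≤ u - 1 := by linarith
  have h1 : (1 : ℝ) - u⁻¹ = (u - 1) * u⁻¹ := by field_simp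
  rw [smul_eq_mul, abs_neg, abs_inv, abs_of_pos (by positivity : (0:ℝ) < u ^ 2), h1,
    Real.mul_rpow hu1 (by positivity), Real.inv_rpow hu0.le, Real.inv_rpow hu0.le,
    ← Real.rpow_neg hu0.le, ← Real.rpow_neg hu0.le,
    show (u ^ 2)⁻¹ = u ^ (-2 : ℝ) by
      rw [← Real.rpow_two, ← Real.rpow_neg hu0.le]]
  have h2 : u ^ (-(a + b)) = u ^ (-2:ℝ) * u ^ (-(b - 1)) * u ^ (-(a - 1)) := by
    rw [← Real.rpow_add hu0, ← Real.rpow_add hu0]; ring_nf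
  rw [h2]; ring

lemma hasDerivWithinAt_inv_Ioi {u : ℝ} (hu : 1 < u) :
    HasDerivWithinAt (fun x : ℝ => x⁻¹) (-(u ^ 2)⁻¹) (Ioi 1) u :=
  ((hasDerivAt_inv (by positivity : u ≠ 0)).hasDerivWithinAt)

lemma injOn_inv_Ioi : Set.InjOn (fun x : ℝ => x⁻¹) (Ioi 1) :=
  fun x _ y _ h => inv_injective h

lemma betaIoi_value {a b : ℝ} (ha : 0 < a) (hb : 0 < b) :
    ∫ u in Ioi (1:ℝ), (u - 1) ^ (a - 1) * u ^ (-(a + b)) =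
      Real.Gamma a * Real.Gamma b / Real.Gamma (a + b) := by
  have := integral_image_eq_integral_abs_deriv_smul measurableSet_Ioi
    (fun u hu => hasDerivWithinAt_inv_Ioi hu) injOn_inv_Ioi
    (fun x : ℝ => x ^ (b - 1) * (1 - x) ^ (a - 1))
  rw [image_inv_Ioi_one] at this
  rw [realBeta_value hb ha] at this
  rw [← setIntegral_congr_fun measurableSet_Ioi
    (fun u hu => betaIoi_pointwise (a := a) (b := b) hu), ← this]
  rw [add_comm b a, mul_comm (Real.Gamma b)]

lemma betaIoi_integrable {a b : ℝ} (ha : 0 < a) (hb : 0 < b) :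
    IntegrableOn (fun u : ℝ => (u - 1) ^ (a - 1) * u ^ (-(a + b))) (Ioi 1) := by
  have := (integrableOn_image_iff_integrableOn_abs_deriv_smul measurableSet_Ioi
    (fun u hu => hasDerivWithinAt_inv_Ioi hu) injOn_inv_Ioi
    (fun x : ℝ => x ^ (b - 1) * (1 - x) ^ (a - 1))).mp
  rw [image_inv_Ioi_one] at this
  have h := this (realBeta_integrable hb ha)
  exact h.congr_fun (fun u hu => betaIoi_pointwise hu) measurableSet_Ioi

lemma xIntegral_integrable {β : ℝ} (hβ0 : 0 < β) {t : ℝ} (ht : 0 < t) (n : ℕ) :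
    IntegrableOn (fun x : ℝ => x ^ n * Real.exp (-(x * t) / β)) (Ioi 0) := by
  have h := integrableOn_rpow_mul_exp_neg_mul_rpow
    (by exact_mod_cast neg_one_lt_zero.trans_le (Nat.cast_nonneg n) : (-1:ℝ) < n)
    (one_pos : (0:ℝ) < 1) (by positivity : 0 < t / β)
  refine h.congr_fun (fun x _ => ?_) measurableSet_Ioi
  beta_reduce
  rw [Real.rpow_one, Real.rpow_natCast]
  congr 1
  ring

lemma xIntegral_value {β : ℝ} (hβ0 : 0 < β) {t : ℝ} (ht : 0 < t) (n : ℕ) :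
    ∫ x in Ioi (0:ℝ), x ^ n * Real.exp (-(x * t) / β) =
      n.factorial * β ^ (n + 1) * t ^ (-(n:ℝ) - 1) := by
  have h := Real.integral_rpow_mul_exp_neg_mul_Ioi
    (by positivity : (0:ℝ) < (n:ℝ) + 1) (by positivity : 0 < t / β)
  rw [setIntegral_congr_fun measurableSet_Ioi (g := fun x : ℝ =>
      x ^ ((n:ℝ) + 1 - 1) * Real.exp (-(t / β * x))) (fun x _ => ?_), h]
  · rw [Real.Gamma_nat_eq_factorial, show (1 / (t / β)) = β * t⁻¹ by field_simp,
      Real.mul_rpow hβ0.le (by positivity), Real.inv_rpow ht.le, ← Real.rpow_neg ht.le,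
      show ((n:ℝ) + 1) = ((n + 1 : ℕ) : ℝ) by push_cast; ring, Real.rpow_natCast]
    rw [show (-((n + 1 : ℕ) : ℝ)) = -(n:ℝ) - 1 by push_cast; ring]
    ring
  · show x ^ n * Real.exp (-(x * t) / β) = x ^ ((n:ℝ) + 1 - 1) * Real.exp (-(t / β * x))
    rw [show (n:ℝ) + 1 - 1 = (n:ℝ) by ring, Real.rpow_natCast]
    congr 1
    ring

lemma image_rpow_Ioi_one {β : ℝ} (hβ0 : 0 < β) :
    (fun u : ℝ => u ^ β) '' Ioi 1 = Ioi 1 := by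
  ext t
  constructor
  · rintro ⟨u, hu, rfl⟩
    have hu0 : (0:ℝ) < u := lt_trans one_pos hu
    exact (Real.one_lt_rpow_iff_of_pos hu0).mpr (Or.inl ⟨hu, hβ0⟩)
  · intro ht
    have ht0 : (0:ℝ) < t := lt_trans one_pos ht
    refine ⟨t ^ (1/β), (Real.one_lt_rpow_iff_of_pos ht0).mpr (Or.inl ⟨ht, by positivity⟩), ?_⟩
    show (t ^ (1/β)) ^ β = t
    rw [← Real.rpow_mul ht0.le, one_div, inv_mul_cancel₀ hβ0.ne', Real.rpow_one]

lemma tIntegral_pointwise {β ν : ℝ} (hβ0 : 0 < β) (n : ℕ) {u : ℝ} (hu : 1 < u) :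
    |β * u ^ (β - 1)| •
      (((u ^ β) ^ (1/β) - 1) ^ (-ν - 1) * (u ^ β) ^ (1/β - 1) * (u ^ β) ^ (-(n:ℝ) - 1)) =
      β * ((u - 1) ^ (-ν - 1) * u ^ (-(β * n + β))) := by
  have hu0 : (0:ℝ) < u := lt_trans one_pos hu
  have e1 : (u ^ β) ^ (1/β) = u := by
    rw [← Real.rpow_mul hu0.le, mul_one_div, div_self hβ0.ne', Real.rpow_one]
  have e2 : (u ^ β) ^ (1/β - 1) = u ^ (1 - β) := by
    rw [← Real.rpow_mul hu0.le]
    congr 1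
    field_simp
  have e3 : (u ^ β) ^ (-(n:ℝ) - 1) = u ^ (β * (-(n:ℝ) - 1)) := by
    rw [← Real.rpow_mul hu0.le]
  rw [e1, e2, e3, smul_eq_mul, abs_of_pos (by positivity : (0:ℝ) < β * u ^ (β - 1))]
  have e4 : u ^ (β - 1) * u ^ (1 - β) * u ^ (β * (-(n:ℝ) - 1)) = u ^ (-(β * n + β)) := by
    rw [← Real.rpow_add hu0, ← Real.rpow_add hu0]
    congr 1
    ring
  calc β * u ^ (β - 1) * ((u - 1) ^ (-ν - 1) * u ^ (1 - β) * u ^ (β * (-(n:ℝ) - 1)))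
      = β * ((u - 1) ^ (-ν - 1) *
          (u ^ (β - 1) * u ^ (1 - β) * u ^ (β * (-(n:ℝ) - 1)))) := by ring
    _ = _ := by rw [e4]

lemma tIntegral_value {β ν : ℝ} (hβ0 : 0 < β) (hβν : 0 < β + ν) (hν : ν < 0) (n : ℕ) :
    ∫ t in Ioi (1:ℝ), (t ^ (1/β) - 1) ^ (-ν - 1) * t ^ (1/β - 1) * t ^ (-(n:ℝ) - 1) =
      β * (Real.Gamma (-ν) * Real.Gamma (β * n + β + ν) / Real.Gamma (β * n + β)) := by
  have hderiv : ∀ u ∈ Ioi (1:ℝ), HasDerivWithinAt (fun x : ℝ => x ^ β)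
      (β * u ^ (β - 1)) (Ioi 1) u := fun u hu =>
    (Real.hasDerivAt_rpow_const (Or.inl (ne_of_gt (lt_trans one_pos hu)))).hasDerivWithinAt
  have hinj : Set.InjOn (fun x : ℝ => x ^ β) (Ioi 1) :=
    (Real.rpow_left_injOn hβ0.ne').mono (fun x (hx : x ∈ Ioi (1:ℝ)) => (le_of_lt (lt_trans one_pos hx) : (0:ℝ) ≤ x))
  have key := integral_image_eq_integral_abs_deriv_smul measurableSet_Ioi hderiv hinj
    (fun t : ℝ => (t ^ (1/β) - 1) ^ (-ν - 1) * t ^ (1/β - 1) * t ^ (-(n:ℝ) - 1))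
  rw [image_rpow_Ioi_one hβ0] at key
  rw [key, setIntegral_congr_fun measurableSet_Ioi
      (fun u hu => tIntegral_pointwise hβ0 n (ν := ν) hu), integral_const_mul]
  have ha : (0:ℝ) < -ν := by linarith
  have hb : (0:ℝ) < β * n + β + ν := by
    have : (0:ℝ) ≤ β * n := by positivity
    linarith
  have h2 := betaIoi_value ha hb
  simp only [show -(β * (n:ℝ) + β) = -(-ν + (β * (n:ℝ) + β + ν)) from by ring]
  rw [h2, show -ν + (β * (n:ℝ) + β + ν) = β * (n:ℝ) + β from by ring]

lemma tIntegral_integrable {β ν : ℝ} (hβ0 : 0 < β) (hβν : 0 < β + ν) (hν : ν < 0) (n : ℕ) :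
    IntegrableOn (fun t : ℝ =>
      (t ^ (1/β) - 1) ^ (-ν - 1) * t ^ (1/β - 1) * t ^ (-(n:ℝ) - 1)) (Ioi 1) := by
  have hderiv : ∀ u ∈ Ioi (1:ℝ), HasDerivWithinAt (fun x : ℝ => x ^ β)
      (β * u ^ (β - 1)) (Ioi 1) u := fun u hu =>
    (Real.hasDerivAt_rpow_const (Or.inl (ne_of_gt (lt_trans one_pos hu)))).hasDerivWithinAt
  have hinj : Set.InjOn (fun x : ℝ => x ^ β) (Ioi 1) :=
    (Real.rpow_left_injOn hβ0.ne').mono (fun x (hx : x ∈ Ioi (1:ℝ)) => (le_of_lt (lt_trans one_pos hx) : (0:ℝ) ≤ x))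
  have key := (integrableOn_image_iff_integrableOn_abs_deriv_smul measurableSet_Ioi hderiv hinj
    (fun t : ℝ => (t ^ (1/β) - 1) ^ (-ν - 1) * t ^ (1/β - 1) * t ^ (-(n:ℝ) - 1)))
  rw [image_rpow_Ioi_one hβ0] at key
  rw [key]
  have ha : (0:ℝ) < -ν := by linarith
  have hb : (0:ℝ) < β * n + β + ν := by
    have : (0:ℝ) ≤ β * n := by positivity
    linarith
  have h2 := (betaIoi_integrable ha hb).const_mul β
  refine IntegrableOn.congr_fun h2 (fun u hu => ?_) measurableSet_Ioi
  rw [show -(-ν + (β * (n:ℝ) + β + ν)) = -(β * (n:ℝ) + β) from by ring]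
  exact (tIntegral_pointwise hβ0 n (ν := ν) hu).symm

noncomputable def Fker (β ν : ℝ) (n : ℕ) (t x : ℝ) : ℝ :=
  ((t ^ (1 / β) - 1) ^ (-ν - 1) * t ^ (1 / β - 1)) * (x ^ n * Real.exp (-(x * t) / β))

theorem subWeight_solves_stieltjes (β ν : ℝ) (hβ0 : 0 < β) (hβ1 : β < 1)
    (hν1 : -β < ν) (hν2 : ν < 0) :
    (∀ x : ℝ, 0 < x → 0 ≤ subWeight β ν x) ∧
    ∀ n : ℕ,
      (∫ x in Set.Ioi (0 : ℝ), x ^ n * subWeight β ν x) =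
          β ^ n * Real.Gamma β * n.factorial * Real.Gamma (β * n + β + ν) /
            (Real.Gamma (β + ν) * Real.Gamma (β * n + β)) ∧
        β ^ n * Real.Gamma β * n.factorial * Real.Gamma (β * n + β + ν) /
            (Real.Gamma (β + ν) * Real.Gamma (β * n + β)) = genFact (1 - β) β ν n := by
  have hβν : 0 < β + ν := by linarith
  have hν0 : (0:ℝ) < -ν := by linarith
  have hgnonneg : ∀ t : ℝ, 1 < t →
      0 ≤ (t ^ (1 / β) - 1) ^ (-ν - 1) * t ^ (1 / β - 1) := by
    intro t ht
    have ht0 : (0:ℝ) < t := lt_trans one_pos ht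
    have h1 : (1:ℝ) ≤ t ^ (1 / β) := Real.one_le_rpow ht.le (by positivity)
    exact mul_nonneg (Real.rpow_nonneg (by linarith) _) (Real.rpow_nonneg ht0.le _)
  have hC : 0 ≤ Real.Gamma β / (β ^ 2 * Real.Gamma (β + ν) * Real.Gamma (-ν)) := by
    have g1 := Real.Gamma_pos_of_pos hβ0
    have g2 := Real.Gamma_pos_of_pos hβν
    have g3 := Real.Gamma_pos_of_pos hν0
    positivity
  constructor
  · intro x _
    rw [subWeight]
    apply mul_nonneg hC
    apply setIntegral_nonneg measurableSet_Ioi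
    intro t ht
    exact mul_nonneg (hgnonneg t ht) (Real.exp_nonneg _)
  · intro n
    refine ⟨?_, genFact_eq β ν hβ0 hβν n⟩
    have hmeas : AEStronglyMeasurable (Function.uncurry (Fker β ν n))
        ((volume.restrict (Ioi (1:ℝ))).prod (volume.restrict (Ioi (0:ℝ)))) := by
      have : Measurable (Function.uncurry (Fker β ν n)) := by
        unfold Function.uncurry Fker
        fun_prop
      exact this.aestronglyMeasurable
    have hslice : ∀ᵐ t ∂(volume.restrict (Ioi (1:ℝ))),
        Integrable (fun x => Fker β ν n t x) (volume.restrict (Ioi (0:ℝ))) := by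
      filter_upwards [ae_restrict_mem measurableSet_Ioi] with t ht
      exact (xIntegral_integrable hβ0 (lt_trans one_pos ht) n).const_mul _
    have hnorm : Integrable (fun t => ∫ x, ‖Fker β ν n t x‖ ∂(volume.restrict (Ioi (0:ℝ))))
        (volume.restrict (Ioi (1:ℝ))) := by
      have base := (tIntegral_integrable hβ0 hβν hν2 n).mul_const
        ((n.factorial : ℝ) * β ^ (n + 1))
      refine IntegrableOn.congr_fun base (fun t ht => ?_) measurableSet_Ioi
      have ht0 : (0:ℝ) < t := lt_trans one_pos ht
      have habs : ∀ x ∈ Ioi (0:ℝ), ‖Fker β ν n t x‖ =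
          ((t ^ (1 / β) - 1) ^ (-ν - 1) * t ^ (1 / β - 1)) *
            (x ^ n * Real.exp (-(x * t) / β)) := by
        intro x hx
        rw [Fker, Real.norm_eq_abs, abs_of_nonneg]
        exact mul_nonneg (hgnonneg t ht)
          (mul_nonneg (pow_nonneg (le_of_lt hx) n) (Real.exp_nonneg _))
      show _ = ∫ x in Ioi (0:ℝ), ‖Fker β ν n t x‖
      rw [setIntegral_congr_fun measurableSet_Ioi habs, integral_const_mul,
        xIntegral_value hβ0 ht0 n]
      ring
    have hInt : Integrable (Function.uncurry (Fker β ν n))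
        ((volume.restrict (Ioi (1:ℝ))).prod (volume.restrict (Ioi (0:ℝ)))) :=
      (integrable_prod_iff hmeas).2 ⟨hslice, hnorm⟩
    have hswap := integral_integral_swap hInt
    have hL : (∫ t in Ioi (1:ℝ), ∫ x in Ioi (0:ℝ), Fker β ν n t x) =
        (n.factorial : ℝ) * β ^ (n + 1) *
          (β * (Real.Gamma (-ν) * Real.Gamma (β * n + β + ν) / Real.Gamma (β * n + β))) := by
      have h1 : Set.EqOn (fun t => ∫ x in Ioi (0:ℝ), Fker β ν n t x)
          (fun t => ((n.factorial : ℝ) * β ^ (n + 1)) *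
            ((t ^ (1 / β) - 1) ^ (-ν - 1) * t ^ (1 / β - 1) * t ^ (-(n:ℝ) - 1)))
          (Ioi 1) := by
        intro t ht
        have ht0 : (0:ℝ) < t := lt_trans one_pos ht
        show ∫ x in Ioi (0:ℝ), Fker β ν n t x = _
        unfold Fker
        rw [integral_const_mul, xIntegral_value hβ0 ht0 n]
        ring
      rw [setIntegral_congr_fun measurableSet_Ioi h1, integral_const_mul,
        tIntegral_value hβ0 hβν hν2 n]
    have hR : ∀ x : ℝ, x ^ n * subWeight β ν x =
        (Real.Gamma β / (β ^ 2 * Real.Gamma (β + ν) * Real.Gamma (-ν))) *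
          ∫ t in Ioi (1:ℝ), Fker β ν n t x := by
      intro x
      rw [subWeight]
      have : (∫ t in Ioi (1:ℝ), Fker β ν n t x) = x ^ n *
          ∫ t in Ioi (1:ℝ),
            (t ^ (1 / β) - 1) ^ (-ν - 1) * t ^ (1 / β - 1) * Real.exp (-(x * t) / β) := by
        rw [← integral_const_mul]
        exact setIntegral_congr_fun measurableSet_Ioi (fun t _ => by rw [Fker]; ring)
      rw [this]
      ring
    have hΓc : Real.Gamma (β * n + β) ≠ 0 := by
      have : (0:ℝ) < β * n + β := by positivity
      exact (Real.Gamma_pos_of_pos this).ne'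
    have hΓν : Real.Gamma (-ν) ≠ 0 := (Real.Gamma_pos_of_pos hν0).ne'
    have hΓβν : Real.Gamma (β + ν) ≠ 0 := (Real.Gamma_pos_of_pos hβν).ne'
    calc (∫ x in Ioi (0:ℝ), x ^ n * subWeight β ν x)
        = ∫ x in Ioi (0:ℝ),
            (Real.Gamma β / (β ^ 2 * Real.Gamma (β + ν) * Real.Gamma (-ν))) *
              ∫ t in Ioi (1:ℝ), Fker β ν n t x := by
          exact setIntegral_congr_fun measurableSet_Ioi (fun x _ => hR x)
      _ = (Real.Gamma β / (β ^ 2 * Real.Gamma (β + ν) * Real.Gamma (-ν))) *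
            ∫ x in Ioi (0:ℝ), ∫ t in Ioi (1:ℝ), Fker β ν n t x := integral_const_mul _ _
      _ = (Real.Gamma β / (β ^ 2 * Real.Gamma (β + ν) * Real.Gamma (-ν))) *
            ∫ t in Ioi (1:ℝ), ∫ x in Ioi (0:ℝ), Fker β ν n t x := by rw [← hswap]
      _ = (Real.Gamma β / (β ^ 2 * Real.Gamma (β + ν) * Real.Gamma (-ν))) *
            ((n.factorial : ℝ) * β ^ (n + 1) *
              (β * (Real.Gamma (-ν) * Real.Gamma (β * n + β + ν) /
                Real.Gamma (β * n + β)))) := by rw [hL]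
      _ = β ^ n * Real.Gamma β * n.factorial * Real.Gamma (β * n + β + ν) /
            (Real.Gamma (β + ν) * Real.Gamma (β * n + β)) := by
          field_simp
          ring
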